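/- Conversely, if constant vectors Q₁,...,Q_n ∈ ℝ^k satisfy 𝐀²Q_i = Σ_{j≠i} m_j (Q_i - Q_j) ‖Q_i - Q_j‖^{2a} for all i, then q_i(t) = T_k(A⃗t)Q_i solve the generalized n-body equations q̈_i = Σ_{j≠i} m_j (q_j - q_i) ‖q_j - q_i‖^{2a}. -/

import Mathlib

open Real Finset Matrix Filter

/-- The 2×2 rotation matrix of angle `t`. -/
noncomputable def rot (t : ℝ) : Matrix (Fin 2) (Fin 2) ℝ :=
  !![Real.cos t, -Real.sin t; Real.sin t, Real.cos t]

/-- The k×k block-diagonal matrix with 2×2 rotation blocks `rot (θ s)`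
(and a final diagonal entry 1 if `k` is odd). -/
noncomputable def Tk (k : ℕ) (θ : Fin (k / 2) → ℝ) : Matrix (Fin k) (Fin k) ℝ :=
  Matrix.of fun i j =>
    if h : (i : ℕ) / 2 = (j : ℕ) / 2 ∧ (i : ℕ) / 2 < k / 2 then
      rot (θ ⟨(i : ℕ) / 2, h.2⟩) ⟨(i : ℕ) % 2, Nat.mod_lt _ (by norm_num)⟩
        ⟨(j : ℕ) % 2, Nat.mod_lt _ (by norm_num)⟩
    else if i = j then 1 else 0

/-- The diagonal matrix `diag (A₁, A₁, ..., A_p, A_p, [0])`. -/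
noncomputable def Amat (k : ℕ) (A : Fin (k / 2) → ℝ) : Matrix (Fin k) (Fin k) ℝ :=
  Matrix.diagonal fun i => if h : (i : ℕ) / 2 < k / 2 then A ⟨(i : ℕ) / 2, h⟩ else 0

/-- Matrix action on Euclidean vectors. -/
noncomputable def mulVecE {k : ℕ} (M : Matrix (Fin k) (Fin k) ℝ)
    (x : EuclideanSpace ℝ (Fin k)) : EuclideanSpace ℝ (Fin k) :=
  WithLp.toLp 2 (M.mulVec x)

lemma rot_hasDerivAt (c : ℝ) (p q : Fin 2) (t : ℝ) :
    HasDerivAt (fun t => rot (c * t) p q) (c * rot (c * t + π/2) p q) t := by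
  have hc : HasDerivAt (fun u : ℝ => c * u) c t := by
    simpa using (hasDerivAt_id t).const_mul c
  fin_cases p <;> fin_cases q <;>
    simp only [rot, Matrix.cons_val', Matrix.cons_val_zero, Matrix.cons_val_one,
      Matrix.head_cons, Matrix.empty_val', Matrix.cons_val_fin_one, Matrix.head_fin_const,
      Matrix.of_apply, Fin.mk_zero, Fin.mk_one, Real.cos_add_pi_div_two, Real.sin_add_pi_div_two]
  · exact by simpa [mul_comm] using hc.cos
  · exact by have := hc.sin.neg; simp only [Pi.neg_def] at this; simpa [mul_comm] using this
  · exact by simpa [mul_comm] using hc.sin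
  · exact by simpa [mul_comm] using hc.cos

lemma rot'_hasDerivAt (c : ℝ) (p q : Fin 2) (t : ℝ) :
    HasDerivAt (fun t => c * rot (c * t + π/2) p q) (-(c^2) * rot (c * t) p q) t := by
  have hc : HasDerivAt (fun u : ℝ => c * u + π/2) c t := by
    simpa using ((hasDerivAt_id t).const_mul c).add_const (π/2)
  fin_cases p <;> fin_cases q <;>
    simp only [rot, Matrix.cons_val', Matrix.cons_val_zero, Matrix.cons_val_one,
      Matrix.head_cons, Matrix.empty_val', Matrix.cons_val_fin_one, Matrix.head_fin_const,
      Matrix.of_apply, Fin.mk_zero, Fin.mk_one]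
  · refine (hc.cos.const_mul c).congr_deriv ?_
    simp [Real.cos_add_pi_div_two, Real.sin_add_pi_div_two]; ring
  · refine ((hc.sin.neg).const_mul c).congr_deriv ?_
    simp [Real.cos_add_pi_div_two, Real.sin_add_pi_div_two]; ring
  · refine (hc.sin.const_mul c).congr_deriv ?_
    simp [Real.cos_add_pi_div_two, Real.sin_add_pi_div_two]; ring
  · refine (hc.cos.const_mul c).congr_deriv ?_
    simp [Real.cos_add_pi_div_two, Real.sin_add_pi_div_two]; ring

/-- diagonal entries of `Amat`. -/
noncomputable def dvec (k : ℕ) (A : Fin (k / 2) → ℝ) (i : Fin k) : ℝ :=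
  if h : (i : ℕ) / 2 < k / 2 then A ⟨(i : ℕ) / 2, h⟩ else 0

/-- derivative matrix of `t ↦ Tk k (fun s => A s * t)`. -/
noncomputable def Tk' (k : ℕ) (A : Fin (k / 2) → ℝ) (t : ℝ) : Matrix (Fin k) (Fin k) ℝ :=
  Matrix.of fun i j =>
    if h : (i : ℕ) / 2 = (j : ℕ) / 2 ∧ (i : ℕ) / 2 < k / 2 then
      A ⟨(i : ℕ) / 2, h.2⟩ *
        rot (A ⟨(i : ℕ) / 2, h.2⟩ * t + π/2) ⟨(i : ℕ) % 2, Nat.mod_lt _ (by norm_num)⟩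
          ⟨(j : ℕ) % 2, Nat.mod_lt _ (by norm_num)⟩
    else 0

lemma entry_hasDerivAt (k : ℕ) (A : Fin (k / 2) → ℝ) (i j : Fin k) (t : ℝ) :
    HasDerivAt (fun t => Tk k (fun s => A s * t) i j) (Tk' k A t i j) t := by
  simp only [Tk, Tk', Matrix.of_apply]
  by_cases h : (i : ℕ) / 2 = (j : ℕ) / 2 ∧ (i : ℕ) / 2 < k / 2
  · simp only [dif_pos h]
    exact rot_hasDerivAt _ _ _ t
  · simp only [dif_neg h]
    exact hasDerivAt_const _ _

lemma entry'_hasDerivAt (k : ℕ) (A : Fin (k / 2) → ℝ) (i j : Fin k) (t : ℝ) :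
    HasDerivAt (fun t => Tk' k A t i j)
      (-(dvec k A i)^2 * Tk k (fun s => A s * t) i j) t := by
  simp only [Tk, Tk', Matrix.of_apply, dvec]
  by_cases h : (i : ℕ) / 2 = (j : ℕ) / 2 ∧ (i : ℕ) / 2 < k / 2
  · simp only [dif_pos h, dif_pos h.2, neg_pow]
    have := rot'_hasDerivAt (A ⟨(i : ℕ) / 2, h.2⟩)
      ⟨(i : ℕ) % 2, Nat.mod_lt _ (by norm_num)⟩ ⟨(j : ℕ) % 2, Nat.mod_lt _ (by norm_num)⟩ t
    convert this using 1
  · simp only [dif_neg h]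
    by_cases hij : i = j
    · have : ¬ ((i : ℕ) / 2 < k / 2) := by
        intro hlt; exact h ⟨by rw [hij], hlt⟩
      simp only [if_pos hij, dif_neg this]
      simpa using hasDerivAt_const t (0:ℝ)
    · simp only [if_neg hij, mul_zero]
      exact hasDerivAt_const _ _

lemma hasDerivAt_euclidean {k : ℕ} (f : ℝ → EuclideanSpace ℝ (Fin k))
    (f' : EuclideanSpace ℝ (Fin k)) (t : ℝ)
    (h : ∀ l, HasDerivAt (fun t => f t l) (f' l) t) : HasDerivAt f f' t := by
  let e := EuclideanSpace.equiv (Fin k) ℝ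
  have : HasDerivAt (fun u => e (f u)) (e f') t := hasDerivAt_pi.2 h
  have h2 := ((e.symm : (Fin k → ℝ) →L[ℝ] EuclideanSpace ℝ (Fin k)).hasFDerivAt (x := e (f t))).comp_hasDerivAt t this
  simp [Function.comp_def] at h2
  exact h2

lemma key1 {k : ℕ} (A : Fin (k / 2) → ℝ) (x : EuclideanSpace ℝ (Fin k)) (t : ℝ) :
    HasDerivAt (fun t => mulVecE (Tk k (fun s => A s * t)) x) (mulVecE (Tk' k A t) x) t := by
  apply hasDerivAt_euclidean
  intro l
  have : ∀ u : ℝ, mulVecE (Tk k (fun s => A s * u)) x l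
      = ∑ j, Tk k (fun s => A s * u) l j * x j := fun u => rfl
  simp only [this]
  have h2 : mulVecE (Tk' k A t) x l = ∑ j, Tk' k A t l j * x j := rfl
  rw [h2]
  exact HasDerivAt.fun_sum fun j _ => (entry_hasDerivAt k A l j t).mul_const (x j)

lemma dvec_eq {k : ℕ} (A : Fin (k / 2) → ℝ) (l j : Fin k)
    (h : (l : ℕ) / 2 = (j : ℕ) / 2) : dvec k A l = dvec k A j := by
  simp only [dvec, h]

lemma key2 {k : ℕ} (A : Fin (k / 2) → ℝ) (x : EuclideanSpace ℝ (Fin k)) (t : ℝ) :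
    HasDerivAt (fun t => mulVecE (Tk' k A t) x)
      (-(mulVecE (Tk k (fun s => A s * t)) (mulVecE ((Amat k A)^2) x))) t := by
  apply hasDerivAt_euclidean
  intro l
  have h1 : ∀ u : ℝ, mulVecE (Tk' k A u) x l = ∑ j, Tk' k A u l j * x j := fun u => rfl
  simp only [h1]
  have h2 : (-(mulVecE (Tk k (fun s => A s * t)) (mulVecE ((Amat k A)^2) x))) l
      = ∑ j, -((dvec k A l)^2 * Tk k (fun s => A s * t) l j * x j) := by
    have e1 : (-(mulVecE (Tk k (fun s => A s * t)) (mulVecE ((Amat k A)^2) x))) l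
        = -∑ j, Tk k (fun s => A s * t) l j * (mulVecE ((Amat k A)^2) x) j := rfl
    rw [e1, ← Finset.sum_neg_distrib]
    refine Finset.sum_congr rfl fun j _ => ?_
    have e2 : (mulVecE ((Amat k A)^2) x) j = dvec k A j * (dvec k A j * x j) := by
      simp only [mulVecE, pow_two]
      rw [← Matrix.mulVec_mulVec]
      show (Matrix.diagonal (dvec k A)).mulVec _ j = _
      rw [Matrix.mulVec_diagonal]
      congr 1
      exact Matrix.mulVec_diagonal _ _ _
    rw [e2]
    have e3 : (dvec k A l)^2 * Tk k (fun s => A s * t) l j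
        = Tk k (fun s => A s * t) l j * (dvec k A j)^2 := by
      by_cases h : (l : ℕ) / 2 = (j : ℕ) / 2 ∧ (l : ℕ) / 2 < k / 2
      · rw [dvec_eq A l j h.1]; ring
      · by_cases hlj : l = j
        · rw [hlj]; ring
        · simp only [Tk, Matrix.of_apply, dif_neg h, if_neg hlj, mul_zero, zero_mul]
    linear_combination (x j) * e3
  rw [h2]
  refine HasDerivAt.fun_sum fun j _ => ?_
  have hd := (entry'_hasDerivAt k A l j t).mul_const (x j)
  refine hd.congr_deriv ?_
  ring

lemma Tk_apply_pos {k : ℕ} (θ : Fin (k / 2) → ℝ) (i j : Fin k)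
    (h1 : (i : ℕ) / 2 = (j : ℕ) / 2) (h2 : (i : ℕ) / 2 < k / 2) :
    Tk k θ i j = rot (θ ⟨(i : ℕ) / 2, h2⟩) ⟨(i : ℕ) % 2, Nat.mod_lt _ (by norm_num)⟩
      ⟨(j : ℕ) % 2, Nat.mod_lt _ (by norm_num)⟩ := by
  simp only [Tk, Matrix.of_apply, dif_pos (⟨h1, h2⟩ : _ ∧ _)]

lemma Tk_apply_neg {k : ℕ} (θ : Fin (k / 2) → ℝ) (i j : Fin k)
    (h : ¬((i : ℕ) / 2 = (j : ℕ) / 2 ∧ (i : ℕ) / 2 < k / 2)) :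
    Tk k θ i j = if i = j then 1 else 0 := by
  simp only [Tk, Matrix.of_apply, dif_neg h]

lemma rot_col (u : ℝ) (p q : Fin 2) :
    rot u 0 p * rot u 0 q + rot u 1 p * rot u 1 q = if p = q then 1 else 0 := by
  fin_cases p <;> fin_cases q <;> simp [rot] <;> ring_nf <;>
    nlinarith [Real.sin_sq_add_cos_sq u]

lemma TtT (k : ℕ) (θ : Fin (k / 2) → ℝ) : (Tk k θ)ᵀ * (Tk k θ) = 1 := by
  ext i m
  rw [Matrix.mul_apply]
  simp only [Matrix.transpose_apply, Matrix.one_apply]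
  by_cases hi : (i : ℕ) / 2 < k / 2
  · have hb0 : 2 * ((i : ℕ) / 2) < k := by omega
    have hb1 : 2 * ((i : ℕ) / 2) + 1 < k := by omega
    have key : ∀ c : Fin k, c ≠ ⟨2 * ((i : ℕ) / 2), hb0⟩ →
        c ≠ ⟨2 * ((i : ℕ) / 2) + 1, hb1⟩ → Tk k θ c i = 0 := by
      intro c hc0 hc1
      have hcv0 : (c : ℕ) ≠ 2 * ((i : ℕ) / 2) := fun h => hc0 (Fin.ext h)
      have hcv1 : (c : ℕ) ≠ 2 * ((i : ℕ) / 2) + 1 := fun h => hc1 (Fin.ext h)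
      rw [Tk_apply_neg, if_neg]
      · intro h
        have := congrArg Fin.val h
        omega
      · rintro ⟨h1, _⟩
        omega
    have hsum : ∑ j, Tk k θ j i * Tk k θ j m
        = Tk k θ ⟨2 * ((i : ℕ) / 2), hb0⟩ i * Tk k θ ⟨2 * ((i : ℕ) / 2), hb0⟩ m
        + Tk k θ ⟨2 * ((i : ℕ) / 2) + 1, hb1⟩ i * Tk k θ ⟨2 * ((i : ℕ) / 2) + 1, hb1⟩ m := by
      refine Finset.sum_eq_add_of_mem _ _ (Finset.mem_univ _) (Finset.mem_univ _)
        (fun h => by have := congrArg Fin.val h; simp only at this; omega)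
        (fun c _ hc => by rw [key c hc.1 hc.2, zero_mul])
    rw [hsum]
    rw [Tk_apply_pos θ _ i (by show 2 * ((i:ℕ)/2) / 2 = (i:ℕ)/2; omega)
        (by show 2 * ((i:ℕ)/2) / 2 < k/2; omega),
      Tk_apply_pos θ _ i (by show (2 * ((i:ℕ)/2) + 1) / 2 = (i:ℕ)/2; omega)
        (by show (2 * ((i:ℕ)/2) + 1) / 2 < k/2; omega)]
    have e0 : ∀ h, (⟨(2 * ((i:ℕ)/2)) % 2, h⟩ : Fin 2) = 0 :=
      fun h => Fin.ext (by show 2 * ((i:ℕ)/2) % 2 = 0; omega)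
    have e1 : ∀ h, (⟨(2 * ((i:ℕ)/2) + 1) % 2, h⟩ : Fin 2) = 1 :=
      fun h => Fin.ext (by show (2 * ((i:ℕ)/2) + 1) % 2 = 1; omega)
    have eθ0 : ∀ h, (⟨(2 * ((i:ℕ)/2)) / 2, h⟩ : Fin (k/2)) = ⟨(i:ℕ)/2, hi⟩ :=
      fun h => Fin.ext (by show 2 * ((i:ℕ)/2) / 2 = (i:ℕ)/2; omega)
    have eθ1 : ∀ h, (⟨(2 * ((i:ℕ)/2) + 1) / 2, h⟩ : Fin (k/2)) = ⟨(i:ℕ)/2, hi⟩ :=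
      fun h => Fin.ext (by show (2 * ((i:ℕ)/2) + 1) / 2 = (i:ℕ)/2; omega)
    by_cases hm : (m : ℕ) / 2 = (i : ℕ) / 2
    · rw [Tk_apply_pos θ _ m (by show 2 * ((i:ℕ)/2) / 2 = (m:ℕ)/2; omega)
          (by show 2 * ((i:ℕ)/2) / 2 < k/2; omega),
        Tk_apply_pos θ _ m (by show (2 * ((i:ℕ)/2) + 1) / 2 = (m:ℕ)/2; omega)
          (by show (2 * ((i:ℕ)/2) + 1) / 2 < k/2; omega)]
      rw [e0, e1, eθ0, eθ1, rot_col]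
      have hiff : (i = m) ↔ ((⟨(i : ℕ) % 2, Nat.mod_lt _ (by norm_num)⟩ : Fin 2)
          = ⟨(m : ℕ) % 2, Nat.mod_lt _ (by norm_num)⟩) := by
        rw [Fin.ext_iff, Fin.ext_iff]
        constructor
        · intro h'; simp only; omega
        · intro h'; simp only at h'; omega
      simp only [hiff]
    · have hm0 : Tk k θ (⟨2 * ((i : ℕ) / 2), hb0⟩ : Fin k) m = 0 := by
        rw [Tk_apply_neg, if_neg]
        · intro h'
          have := congrArg Fin.val h'
          simp only at this
          omega
        · rintro ⟨h1, _⟩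
          have h1' : 2 * ((i:ℕ)/2) / 2 = (m:ℕ)/2 := h1
          omega
      have hm1 : Tk k θ (⟨2 * ((i : ℕ) / 2) + 1, hb1⟩ : Fin k) m = 0 := by
        rw [Tk_apply_neg, if_neg]
        · intro h'
          have := congrArg Fin.val h'
          simp only at this
          omega
        · rintro ⟨h1, _⟩
          have h1' : (2 * ((i:ℕ)/2) + 1) / 2 = (m:ℕ)/2 := h1
          omega
      rw [hm0, hm1, if_neg (fun h => by subst h; omega)]
      ring
  · have hsum : ∑ j, Tk k θ j i * Tk k θ j m = Tk k θ i i * Tk k θ i m := by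
      refine Finset.sum_eq_single_of_mem i (Finset.mem_univ _) ?_
      intro c _ hc
      have : Tk k θ c i = 0 := by
        rw [Tk_apply_neg, if_neg hc]
        rintro ⟨h1, h2⟩; exact hi (h1 ▸ h2)
      rw [this, zero_mul]
    rw [hsum, Tk_apply_neg θ i i (fun h => hi h.2), Tk_apply_neg θ i m (fun h => hi h.2)]
    simp

lemma norm_mulVecE {k : ℕ} (θ : Fin (k / 2) → ℝ) (x : EuclideanSpace ℝ (Fin k)) :
    ‖mulVecE (Tk k θ) x‖ = ‖x‖ := by
  rw [EuclideanSpace.norm_eq, EuclideanSpace.norm_eq]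
  congr 1
  have h1 : ∀ y : EuclideanSpace ℝ (Fin k), ∑ l, ‖y l‖ ^ 2 = (y : Fin k → ℝ) ⬝ᵥ (y : Fin k → ℝ) := by
    intro y
    simp only [Real.norm_eq_abs, sq_abs, dotProduct, pow_two, abs_mul_abs_self]
  rw [h1, h1]
  show (Tk k θ *ᵥ x) ⬝ᵥ (Tk k θ *ᵥ x) = _
  rw [Matrix.dotProduct_mulVec, ← Matrix.mulVec_transpose, Matrix.mulVec_mulVec, TtT,
    Matrix.one_mulVec]

lemma mulVecE_sum {k : ℕ} {ι : Type*} (M : Matrix (Fin k) (Fin k) ℝ) (s : Finset ι)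
    (f : ι → EuclideanSpace ℝ (Fin k)) :
    mulVecE M (∑ j ∈ s, f j) = ∑ j ∈ s, mulVecE M (f j) := by
  ext l
  rw [WithLp.ofLp_sum, Finset.sum_apply]
  show ∑ j', M l j' * (∑ j ∈ s, f j) j' = ∑ j ∈ s, mulVecE M (f j) l
  have : ∀ j', (∑ j ∈ s, f j) j' = ∑ j ∈ s, f j j' := fun j' => by rw [WithLp.ofLp_sum, Finset.sum_apply]
  simp only [this, Finset.mul_sum]
  rw [Finset.sum_comm]
  rfl

lemma mulVecE_smul {k : ℕ} (M : Matrix (Fin k) (Fin k) ℝ) (c : ℝ)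
    (x : EuclideanSpace ℝ (Fin k)) : mulVecE M (c • x) = c • mulVecE M x := by
  ext l
  show ∑ j, M l j * (c * x j) = c * ∑ j, M l j * x j
  rw [Finset.mul_sum]
  exact Finset.sum_congr rfl fun j _ => by ring

lemma mulVecE_sub {k : ℕ} (M : Matrix (Fin k) (Fin k) ℝ)
    (x y : EuclideanSpace ℝ (Fin k)) : mulVecE M (x - y) = mulVecE M x - mulVecE M y := by
  ext l
  show ∑ j, M l j * (x j - y j) = (∑ j, M l j * x j) - ∑ j, M l j * y j
  rw [← Finset.sum_sub_distrib]
  exact Finset.sum_congr rfl fun j _ => by ring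

/-- conversely, if the `Q_i` satisfy the relative equilibrium criterion, then
`q_i(t) = T_k(A⃗t) Q_i` solve the generalized n-body equations. -/
theorem solution_of_criterion {k n : ℕ} (hn : 3 ≤ n) (A : Fin (k / 2) → ℝ)
    (hA : ∀ s, 0 < A s) (m : Fin n → ℝ) (hm : ∀ i, 0 < m i) (a : ℝ) (ha : a < -1/2)
    (Q : Fin n → EuclideanSpace ℝ (Fin k)) (hQ : ∀ i j, i ≠ j → Q i ≠ Q j)
    (hcrit : ∀ i, mulVecE ((Amat k A) ^ 2) (Q i) =
      ∑ j ∈ Finset.univ.filter (· ≠ i), (m j * ‖Q i - Q j‖ ^ (2 * a)) • (Q i - Q j))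
    (q : Fin n → ℝ → EuclideanSpace ℝ (Fin k))
    (hq : ∀ i t, q i t = mulVecE (Tk k (fun s => A s * t)) (Q i)) :
    ∀ i t, deriv (deriv (q i)) t =
      ∑ j ∈ Finset.univ.filter (· ≠ i), (m j * ‖q j t - q i t‖ ^ (2 * a)) • (q j t - q i t) := by
  intro i t
  have hqf : q i = fun u => mulVecE (Tk k (fun s => A s * u)) (Q i) := funext (hq i)
  have d1 : deriv (q i) = fun u => mulVecE (Tk' k A u) (Q i) := by
    funext u
    rw [hqf]
    exact (key1 A (Q i) u).deriv
  have d2 : deriv (deriv (q i)) t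
      = -(mulVecE (Tk k (fun s => A s * t)) (mulVecE ((Amat k A) ^ 2) (Q i))) := by
    rw [d1]
    exact (key2 A (Q i) t).deriv
  rw [d2, hcrit i, mulVecE_sum, ← Finset.sum_neg_distrib]
  refine Finset.sum_congr rfl fun j hj => ?_
  rw [mulVecE_smul, mulVecE_sub]
  have hnorm : ‖q j t - q i t‖ = ‖Q i - Q j‖ := by
    rw [hq j t, hq i t, ← mulVecE_sub, norm_mulVecE, norm_sub_rev]
  rw [hnorm, hq j t, hq i t]
  rw [← smul_neg, neg_sub]
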